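/- Let T be an even 1-3 tree and k ≥ 1 an integer. The graph G(T) contains a cycle of length 2k+1 if and only if T contains a leaf-leaf path of length 2k−2. -/

import Mathlib

/-- A vertex of a graph is a *leaf* if it has exactly one neighbour. -/
def IsLeafVertex {V : Type} (T : SimpleGraph V) (v : V) : Prop :=
  (T.neighborSet v).ncard = 1

/-- A *1-3 tree* is a finite tree in which every vertex has degree 1 or 3. -/
def IsOneThreeTree {V : Type} (T : SimpleGraph V) : Prop :=
  T.IsTree ∧ ∀ v : V, (T.neighborSet v).ncard = 1 ∨ (T.neighborSet v).ncard = 3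

/-- A tree is *even* if the (unique) path between any two leaves has even length. -/
def IsEvenTree {V : Type} (T : SimpleGraph V) : Prop :=
  ∀ u w : V, IsLeafVertex T u → IsLeafVertex T w → Even (T.dist u w)

/-- `T` has a *leaf-leaf path of length `ℓ`*: a path with `ℓ` edges whose two
endpoints are leaves (for `ℓ = 0` this is a single leaf). -/
def HasLeafLeafPath {V : Type} (T : SimpleGraph V) (ℓ : ℕ) : Prop :=
  ∃ (u w : V) (p : T.Walk u w),
    IsLeafVertex T u ∧ IsLeafVertex T w ∧ p.IsPath ∧ p.length = ℓ

/-- The adjacency relation of the graph `G(T)`: two new vertices `x = Sum.inr 0`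
and `y = Sum.inr 1` are added to `T`, joined to each other and to every leaf of `T`. -/
def gtAdj {V : Type} (T : SimpleGraph V) : (V ⊕ Fin 2) → (V ⊕ Fin 2) → Prop
  | Sum.inl u, Sum.inl v => T.Adj u v
  | Sum.inl u, Sum.inr _ => IsLeafVertex T u
  | Sum.inr _, Sum.inl v => IsLeafVertex T v
  | Sum.inr i, Sum.inr j => i ≠ j

/-- The graph `G(T)` obtained from a tree `T` by adding two new vertices `x` and
`y`, the edge `xy`, and all edges from `x` and from `y` to the leaves of `T`. -/
def gtGraph {V : Type} (T : SimpleGraph V) : SimpleGraph (V ⊕ Fin 2) where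
  Adj := gtAdj T
  symm := by
    constructor
    rintro (u | i) (v | j) h
    · exact T.adj_symm h
    · exact h
    · exact h
    · exact Ne.symm h
  loopless := by
    constructor
    rintro (u | i) h
    · exact T.irrefl h
    · exact h rfl

/-- `G` contains a cycle with exactly `ℓ` edges. -/
def HasCycleOfLength {W : Type} (G : SimpleGraph W) (ℓ : ℕ) : Prop :=
  ∃ (v : W) (c : G.Walk v v), c.IsCycle ∧ c.length = ℓ


open SimpleGraph

section Aux

variable {V : Type}

lemma tree_path_length_eq_dist {T : SimpleGraph V} (hT : T.IsTree) {a b : V}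
    (p : T.Walk a b) (hp : p.IsPath) : p.length = T.dist a b := by
  obtain ⟨q, hq, hql⟩ := hT.isConnected.exists_path_of_dist a b
  obtain ⟨r, hr, hu⟩ := hT.existsUnique_path a b
  rw [hu p hp, ← hu q hq, ← hql, hu q hq, ← hu p hp]

lemma tree_adj_dist [DecidableEq V] {T : SimpleGraph V} (hT : T.IsTree) (v₀ : V) {u v : V}
    (h : T.Adj u v) :
    T.dist v₀ v = T.dist v₀ u + 1 ∨ T.dist v₀ u = T.dist v₀ v + 1 := by
  obtain ⟨p, hp, hpl⟩ := hT.isConnected.exists_path_of_dist v₀ u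
  by_cases hv : v ∈ p.support
  · right
    have hsplit := p.take_spec hv
    have h1 : (p.takeUntil v hv).IsPath := hp.takeUntil hv
    have h2 : (p.dropUntil v hv).IsPath := hp.dropUntil hv
    have hone : (Walk.cons h.symm Walk.nil : T.Walk v u).IsPath := by simp [h.symm.ne]
    obtain ⟨r, hr, hu'⟩ := hT.existsUnique_path v u
    have := (hu' _ h2).trans (hu' _ hone).symm
    have hlen : (p.dropUntil v hv).length = 1 := by rw [this]; simp
    have := congrArg Walk.length hsplit
    rw [Walk.length_append, hlen] at this
    rw [← hpl, ← this, tree_path_length_eq_dist hT _ h1]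
  · left
    have hq : (Walk.cons h.symm p.reverse : T.Walk v v₀).IsPath := by
      rw [Walk.cons_isPath_iff]
      exact ⟨hp.reverse, by simpa [Walk.support_reverse] using hv⟩
    have := tree_path_length_eq_dist hT _ hq
    simp only [Walk.length_cons, Walk.length_reverse] at this
    rw [T.dist_comm (u := v₀) (v := v), ← this, hpl]

lemma exists_coloring {T : SimpleGraph V} (hT : T.IsTree) (hTe : IsEvenTree T) :
    ∃ c : V → ZMod 2, (∀ u v : V, T.Adj u v → c u ≠ c v) ∧
      (∀ v : V, IsLeafVertex T v → c v = 0) := by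
  classical
  have hadj : ∀ (v₀ : V), ∀ u v : V, T.Adj u v →
      ((T.dist v₀ u : ZMod 2)) ≠ ((T.dist v₀ v : ZMod 2)) := by
    intro v₀ u v h hc
    rcases tree_adj_dist hT v₀ h with h' | h' <;> rw [h'] at hc <;> push_cast at hc <;>
      simp [left_eq_add, add_eq_left] at hc
  by_cases hL : ∃ v₀ : V, IsLeafVertex T v₀
  · obtain ⟨v₀, hv₀⟩ := hL
    refine ⟨fun v => (T.dist v₀ v : ZMod 2), hadj v₀, ?_⟩
    intro v hv
    obtain ⟨m, hm⟩ := hTe v₀ v hv₀ hv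
    show ((T.dist v₀ v : ℕ) : ZMod 2) = 0
    rw [hm]
    push_cast
    have h2 : (2 : ZMod 2) = 0 := by decide
    linear_combination (m : ZMod 2) * h2
  · have : Nonempty V := hT.isConnected.nonempty
    refine ⟨fun v => (T.dist (Classical.arbitrary V) v : ZMod 2),
      hadj _, fun v hv => absurd ⟨v, hv⟩ hL⟩

/-- One step of the parity argument in `G(T)`. -/
lemma gt_step [DecidableEq V] {T : SimpleGraph V} {c : V → ZMod 2}
    (hc : ∀ u v : V, T.Adj u v → c u ≠ c v)
    (hleaf : ∀ v : V, IsLeafVertex T v → c v = 0)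
    {a b : V ⊕ Fin 2} (h : (gtGraph T).Adj a b) :
    (1 : ZMod 2) + (if s(a, b) = s((Sum.inr 0 : V ⊕ Fin 2), Sum.inr 1) then 1 else 0)
      = Sum.elim c (fun _ => (1 : ZMod 2)) a + Sum.elim c (fun _ => (1 : ZMod 2)) b := by
  have hzz : ∀ x y : ZMod 2, x ≠ y → (1 : ZMod 2) = x + y := by decide
  rcases a with u | i <;> rcases b with v | j
  · have h' : T.Adj u v := h
    rw [if_neg (by simp [Sym2.eq_iff])]
    simpa using hzz _ _ (hc u v h')
  · have h' : IsLeafVertex T u := h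
    rw [if_neg (by simp [Sym2.eq_iff])]
    simp [hleaf u h']
  · have h' : IsLeafVertex T v := h
    rw [if_neg (by simp [Sym2.eq_iff])]
    simp [hleaf v h']
  · have h' : i ≠ j := h
    rw [if_pos]
    · simp
    · fin_cases i <;> fin_cases j <;> simp_all [Sym2.eq_iff]

lemma gt_walk_parity [DecidableEq V] {T : SimpleGraph V} {c : V → ZMod 2}
    (hc : ∀ u v : V, T.Adj u v → c u ≠ c v)
    (hleaf : ∀ v : V, IsLeafVertex T v → c v = 0) :
    ∀ {a b : V ⊕ Fin 2} (p : (gtGraph T).Walk a b),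
      ((p.length : ZMod 2))
          + ((p.edges.count s((Sum.inr 0 : V ⊕ Fin 2), Sum.inr 1) : ℕ) : ZMod 2)
        = Sum.elim c (fun _ => (1 : ZMod 2)) a + Sum.elim c (fun _ => (1 : ZMod 2)) b := by
  intro a b p
  induction p with
  | nil => simpa using (CharTwo.add_self_eq_zero _).symm
  | @cons u v w h q ih =>
    have hstep := gt_step hc hleaf h
    rw [Walk.length_cons, Walk.edges_cons, List.count_cons]
    simp only [beq_iff_eq]
    by_cases he : s(u, v) = s((Sum.inr 0 : V ⊕ Fin 2), Sum.inr 1)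
    · have h2 : (2 : ZMod 2) = 0 := by decide
      rw [if_pos he] at hstep ⊢
      push_cast
      linear_combination ih + hstep + Sum.elim c (fun _ => (1 : ZMod 2)) v * h2
    · have h2 : (2 : ZMod 2) = 0 := by decide
      rw [if_neg he] at hstep ⊢
      push_cast
      linear_combination ih + hstep + Sum.elim c (fun _ => (1 : ZMod 2)) v * h2

lemma path_first_edge {W : Type} {G : SimpleGraph W} {x y b : W} {p : G.Walk x b}
    (hp : p.IsPath) (he : s(x, y) ∈ p.edges) :
    ∃ (h : G.Adj x y) (r : G.Walk y b), p = Walk.cons h r := by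
  have hadj : G.Adj x y := Walk.adj_of_mem_edges p he
  have hnn : ¬ p.Nil := by
    intro hn
    rw [Walk.nil_iff_length_eq] at hn
    have := Walk.length_edges p
    rw [hn] at this
    rw [List.length_eq_zero_iff.mp this] at he
    simp at he
  obtain ⟨u, h0, q, rfl⟩ := Walk.not_nil_iff.mp hnn
  rw [Walk.cons_isPath_iff] at hp
  rw [Walk.edges_cons, List.mem_cons] at he
  rcases he with he | he
  · rw [Sym2.eq_iff] at he
    rcases he with ⟨-, rfl⟩ | ⟨h1, h2⟩
    · exact ⟨h0, q, rfl⟩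
    · exact absurd h2.symm hadj.ne
  · exact absurd (Walk.fst_mem_support_of_mem_edges q he) hp.2

lemma lift_walk {T : SimpleGraph V} :
    ∀ {s t : V ⊕ Fin 2} (m : (gtGraph T).Walk s t)
      (_ : ∀ j : Fin 2, Sum.inr j ∉ m.support) {a b : V},
      s = Sum.inl a → t = Sum.inl b →
      ∃ p : T.Walk a b, p.length = m.length ∧ p.support.map Sum.inl = m.support := by
  intro s t m
  induction m with
  | nil =>
    intro hs a b ha hb
    obtain rfl : a = b := Sum.inl.inj (ha.symm.trans hb)
    exact ⟨Walk.nil, rfl, by simp [ha]⟩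
  | @cons u v w h q ih =>
    intro hs a b ha hb
    subst ha
    obtain ⟨c', rfl⟩ : ∃ c', v = Sum.inl c' := by
      rcases v with c' | j
      · exact ⟨c', rfl⟩
      · exact absurd (by simp [Walk.support_cons]) (hs j)
    have h' : T.Adj a c' := h
    have hs' : ∀ j : Fin 2, Sum.inr j ∉ q.support := by
      intro j hj
      exact hs j (by simp [Walk.support_cons, hj])
    obtain ⟨p, hl, hsup⟩ := ih hs' rfl hb
    exact ⟨Walk.cons h' p, by simp [hl], by simp [hsup]⟩

end Aux

/-- Let `T` be an even 1-3 tree and `k ≥ 1` an integer.  The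
graph `G(T)` contains a cycle of length `2k+1` if and only if `T` contains a
leaf-leaf path of length `2k−2`. -/
theorem gt_odd_cycle_iff_leaf_path {V : Type} [Fintype V] (T : SimpleGraph V)
    (hT : IsOneThreeTree T) (hTe : IsEvenTree T) (k : ℕ) (hk : 1 ≤ k) :
    HasCycleOfLength (gtGraph T) (2 * k + 1) ↔ HasLeafLeafPath T (2 * k - 2) := by
  classical
  obtain ⟨hTree, hdeg⟩ := hT
  obtain ⟨c, hc, hleaf⟩ := exists_coloring hTree hTe
  let x : V ⊕ Fin 2 := Sum.inr 0
  let y : V ⊕ Fin 2 := Sum.inr 1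
  constructor
  · rintro ⟨v, d0, hcyc, hlen⟩
    -- Step 1: the edge `xy` lies on the cycle.
    have hpar := gt_walk_parity hc hleaf d0
    have hne : d0.edges.count s(x, y) ≠ 0 := by
      intro h0
      rw [hlen, h0] at hpar
      have h1 : ((2 * k + 1 : ℕ) : ZMod 2) = 0 := by
        simpa [CharTwo.add_self_eq_zero] using hpar
      rw [ZMod.natCast_eq_zero_iff] at h1
      omega
    have he₀ : s(x, y) ∈ d0.edges := by
      by_contra h
      exact hne (List.count_eq_zero.mpr h)
    -- Step 2: rotate the cycle to start at `x`.
    have hx : x ∈ d0.support := d0.fst_mem_support_of_mem_edges he₀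
    have hdc : (d0.rotate x hx).IsCycle := hcyc.rotate hx
    have hde : s(x, y) ∈ (d0.rotate x hx).edges :=
      ((d0.rotate_edges x hx).perm.mem_iff).mpr he₀
    have hdl : (d0.rotate x hx).length = 2 * k + 1 := by
      rw [← Walk.length_edges, ((d0.rotate_edges x hx).perm.length_eq),
        Walk.length_edges, hlen]
    have hnn0 : ¬ (d0.rotate x hx).Nil := Walk.not_nil_iff_lt_length.mpr (by omega)
    obtain ⟨b₀, h0, q, hd⟩ := Walk.not_nil_iff.mp hnn0
    rw [hd] at hdc hde hdl
    obtain ⟨hqpath, hqe⟩ := (Walk.cons_isCycle_iff q h0).mp hdc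
    rw [Walk.length_cons] at hdl
    rw [Walk.edges_cons, List.mem_cons] at hde
    -- Step 3: extract a path `r : y → b` with `x ∉ r.support`, `Adj x b`.
    obtain ⟨b, hbadj, r, hrpath, hrx, hrlen⟩ :
        ∃ (b : V ⊕ Fin 2) (_ : (gtGraph T).Adj x b) (r : (gtGraph T).Walk y b),
          r.IsPath ∧ x ∉ r.support ∧ r.length = 2 * k - 1 := by
      rcases hde with hxy | hqe'
      · -- first edge of the cycle is `xy`
        obtain rfl : y = b₀ := by
          rcases Sym2.eq_iff.mp hxy with ⟨-, h'⟩ | ⟨h1, -⟩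
          · exact h'
          · exact absurd h1 h0.ne
        have hqrnn : ¬ q.reverse.Nil :=
          Walk.not_nil_iff_lt_length.mpr (by rw [Walk.length_reverse]; omega)
        obtain ⟨b, hb, r', hqr⟩ := Walk.not_nil_iff.mp hqrnn
        have := hqr ▸ hqpath.reverse
        rw [Walk.cons_isPath_iff] at this
        refine ⟨b, hb, r'.reverse, this.1.reverse, ?_, ?_⟩
        · rw [Walk.support_reverse, List.mem_reverse]
          exact this.2
        · have := congrArg Walk.length hqr
          rw [Walk.length_reverse, Walk.length_cons] at this
          rw [Walk.length_reverse]
          omega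
      · -- last edge of the cycle is `yx`
        have hqrp : q.reverse.IsPath := hqpath.reverse
        have hqre : s(x, y) ∈ q.reverse.edges := by
          rw [Walk.edges_reverse, List.mem_reverse]
          exact hqe'
        obtain ⟨hxy', r0, hqr⟩ := path_first_edge hqrp hqre
        have := hqr ▸ hqrp
        rw [Walk.cons_isPath_iff] at this
        refine ⟨b₀, h0, r0, this.1, this.2, ?_⟩
        have := congrArg Walk.length hqr
        rw [Walk.length_reverse, Walk.length_cons] at this
        omega
    -- Step 4: peel off the first vertex of `r` (a leaf adjacent to `y`).
    have hrnn : ¬ r.Nil := Walk.not_nil_iff_lt_length.mpr (by omega)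
    obtain ⟨a, hya, m, hrm⟩ := Walk.not_nil_iff.mp hrnn
    have hmp := hrm ▸ hrpath
    rw [Walk.cons_isPath_iff] at hmp
    obtain ⟨hmpath, hym⟩ := hmp
    have hxm : x ∉ m.support := by
      intro h
      exact hrx (by rw [hrm]; simp [Walk.support_cons, h])
    have hml : m.length = 2 * k - 2 := by
      have := congrArg Walk.length hrm
      rw [Walk.length_cons] at this
      omega
    -- identify the endpoints of `m` as leaves
    obtain ⟨u, rfl⟩ : ∃ u : V, a = Sum.inl u := by
      rcases a with u | j
      · exact ⟨u, rfl⟩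
      · exfalso
        fin_cases j
        · exact hrx (by rw [hrm]; simp [Walk.support_cons]; exact Or.inr m.start_mem_support)
        · exact (hya : (1 : Fin 2) ≠ 1) rfl
    obtain ⟨w, rfl⟩ : ∃ w : V, b = Sum.inl w := by
      rcases b with w | j
      · exact ⟨w, rfl⟩
      · exfalso
        fin_cases j
        · exact (hbadj : (0 : Fin 2) ≠ 0) rfl
        · have : r = Walk.nil := Walk.isPath_iff_eq_nil (p := r) |>.mp hrpath
          rw [this] at hrlen
          simp at hrlen
          omega
    have hu : IsLeafVertex T u := hya
    have hw : IsLeafVertex T w := hbadj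
    -- Step 5: lift `m` to a walk in `T`.
    obtain ⟨p, hpl, hpsup⟩ := lift_walk m
      (by
        intro j hj
        fin_cases j
        · exact hxm hj
        · exact hym hj) rfl rfl
    have hppath : p.IsPath := by
      rw [Walk.isPath_def]
      have := hmpath.support_nodup
      rw [← hpsup] at this
      exact this.of_map
    exact ⟨u, w, p, hu, hw, hppath, by omega⟩
  · rintro ⟨u, w, p, hu, hw, hp, hlen⟩
    have hyx : (gtGraph T).Adj y x := by
      show (1 : Fin 2) ≠ 0
      decide
    have hxu : (gtGraph T).Adj x (Sum.inl u) := hu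
    have hwy : (gtGraph T).Adj (Sum.inl w) y := hw
    let φ : T →g gtGraph T := ⟨Sum.inl, fun {a b} h => h⟩
    let P : (gtGraph T).Walk (Sum.inl u) (Sum.inl w) := p.map φ
    let Q : (gtGraph T).Walk x y := Walk.cons hxu (P.append (Walk.cons hwy Walk.nil))
    have hQsup : Q.support = x :: (p.support.map Sum.inl ++ [y]) := by
      simp only [Q, P, Walk.support_cons, Walk.support_append, Walk.support_map]
      simp only [List.tail_cons]
      rfl
    have hQpath : Q.IsPath := by
      rw [Walk.isPath_def, hQsup]
      refine List.nodup_cons.mpr ⟨?_, ?_⟩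
      · simp [x, y]
      · rw [List.nodup_append]
        refine ⟨hp.support_nodup.map Sum.inl_injective, List.nodup_singleton y, ?_⟩
        intro z hz b hb
        rw [List.mem_singleton] at hb
        subst hb
        rw [List.mem_map] at hz
        obtain ⟨z', -, hz'⟩ := hz
        intro h
        exact Sum.inl_ne_inr (hz'.trans h)
    have hQe : s(y, x) ∉ Q.edges := by
      intro hmem
      rw [show Q = Walk.cons hxu (P.append (Walk.cons hwy Walk.nil)) from rfl] at hmem
      rw [Walk.edges_cons, List.mem_cons, Walk.edges_append] at hmem
      rcases hmem with hmem | hmem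
      · rcases Sym2.eq_iff.mp hmem with ⟨h1, -⟩ | ⟨h1, -⟩
        · exact absurd (Sum.inr.inj
            (show (Sum.inr 1 : V ⊕ Fin 2) = Sum.inr 0 from h1)) (by decide)
        · exact Sum.inr_ne_inl (show (Sum.inr 1 : V ⊕ Fin 2) = Sum.inl u from h1)
      · rw [List.mem_append] at hmem
        rcases hmem with hmem | hmem
        · have := Walk.fst_mem_support_of_mem_edges P hmem
          rw [Walk.support_map, List.mem_map] at this
          obtain ⟨z', -, hz'⟩ := this
          exact Sum.inl_ne_inr hz'
        · rw [Walk.edges_cons, Walk.edges_nil, List.mem_singleton] at hmem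
          rcases Sym2.eq_iff.mp hmem with ⟨h1, -⟩ | ⟨-, h2⟩
          · exact Sum.inr_ne_inl (show (Sum.inr 1 : V ⊕ Fin 2) = Sum.inl w from h1)
          · exact Sum.inr_ne_inl (show (Sum.inr 0 : V ⊕ Fin 2) = Sum.inl w from h2)
    have hcyc : (Walk.cons hyx Q).IsCycle :=
      (Walk.cons_isCycle_iff Q hyx).mpr ⟨hQpath, hQe⟩
    refine ⟨y, Walk.cons hyx Q, hcyc, ?_⟩
    have : Q.length = p.length + 2 := by
      simp [Q, P, Walk.length_cons, Walk.length_append, Walk.length_map]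
    rw [Walk.length_cons, this]
    omega
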